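/- Let y, y', ỹ, ỹ' ∈ ℤ_{≥0}^2 determine a two-species, two-reaction mass-action network with y' - y = -λ(ỹ' - ỹ), λ > 0, β_1 β_2 < 0 (where β_i = (y'_i - y_i)(ỹ_i - y_i)), and ỹ - y not a scalar multiple of (1, -1). Then there exist positive rate constants and a stoichiometric compatibility class containing exactly two positive steady states, both nondegenerate, exactly one of which is exponentially stable. -/

import Mathlib

open Set

lemma key2 (ψ : ℝ → ℝ) (S : Set ℝ) (hopen : IsOpen S) (hconv : Convex ℝ S)
    (astar : ℝ) (hmem : astar ∈ S)
    (hdiff : ∀ x ∈ S, DifferentiableAt ℝ ψ x)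
    (hsign : ∀ x ∈ S, x ≠ astar → 0 < deriv ψ x * (x - astar)) :
    ∃ t a₁ a₂, a₁ ∈ S ∧ a₂ ∈ S ∧ a₁ < astar ∧ astar < a₂ ∧ ψ a₁ = t ∧ ψ a₂ = t ∧
      ∀ a ∈ S, ψ a = t → a = a₁ ∨ a = a₂ := by
  obtain ⟨ε, hε, hball⟩ := Metric.isOpen_iff.1 hopen astar hmem
  have hb₁S : astar - ε/2 ∈ S := hball (by simp [Real.dist_eq, abs_lt]; rw [abs_of_pos hε]; linarith)
  have hb₂S : astar + ε/2 ∈ S := hball (by simp [Real.dist_eq, abs_lt]; rw [abs_of_pos hε]; linarith)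
  set b₁ := astar - ε/2 with hb₁def
  set b₂ := astar + ε/2 with hb₂def
  have hb₁lt : b₁ < astar := by simp [hb₁def]; linarith
  have hb₂gt : astar < b₂ := by simp [hb₂def]; linarith
  have hcont : ContinuousOn ψ S := fun x hx => (hdiff x hx).continuousAt.continuousWithinAt
  have hanti : StrictAntiOn ψ (S ∩ Iic astar) := by
    apply strictAntiOn_of_deriv_neg (hconv.inter (convex_Iic _))
      (hcont.mono inter_subset_left)
    intro x hx
    rw [interior_inter, hopen.interior_eq, interior_Iic] at hx
    have h := hsign x hx.1 (ne_of_lt hx.2)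
    rcases mul_pos_iff.1 h with ⟨_, h2⟩ | ⟨h1, _⟩
    · exfalso; have := hx.2; simp at this; linarith
    · exact h1
  have hmono : StrictMonoOn ψ (S ∩ Ici astar) := by
    apply strictMonoOn_of_deriv_pos (hconv.inter (convex_Ici _))
      (hcont.mono inter_subset_left)
    intro x hx
    rw [interior_inter, hopen.interior_eq, interior_Ici] at hx
    have h := hsign x hx.1 (ne_of_gt hx.2)
    rcases mul_pos_iff.1 h with ⟨h1, _⟩ | ⟨_, h2⟩
    · exact h1
    · exfalso; have := hx.2; simp at this; linarith
  have hψ1 : ψ astar < ψ b₁ := hanti ⟨hb₁S, le_of_lt hb₁lt⟩ ⟨hmem, Set.self_mem_Iic⟩ hb₁lt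
  have hψ2 : ψ astar < ψ b₂ := hmono ⟨hmem, Set.self_mem_Ici⟩ ⟨hb₂S, le_of_lt hb₂gt⟩ hb₂gt
  set t := (ψ astar + min (ψ b₁) (ψ b₂)) / 2 with htdef
  have htlb : ψ astar < t := by
    have := lt_min hψ1 hψ2
    rw [htdef]; linarith
  have htub1 : t < ψ b₁ := by
    have h1 := min_le_left (ψ b₁) (ψ b₂)
    have := lt_min hψ1 hψ2
    rw [htdef]; linarith
  have htub2 : t < ψ b₂ := by
    have h1 := min_le_right (ψ b₁) (ψ b₂)
    have := lt_min hψ1 hψ2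
    rw [htdef]; linarith
  have hsub1 : Icc b₁ astar ⊆ S := hconv.ordConnected.out hb₁S hmem
  have hsub2 : Icc astar b₂ ⊆ S := hconv.ordConnected.out hmem hb₂S
  obtain ⟨a₁, ha₁mem, ha₁⟩ := intermediate_value_Icc' (le_of_lt hb₁lt) (hcont.mono hsub1)
    (⟨le_of_lt htlb, le_of_lt htub1⟩ : t ∈ Icc (ψ astar) (ψ b₁))
  obtain ⟨a₂, ha₂mem, ha₂⟩ := intermediate_value_Icc (le_of_lt hb₂gt) (hcont.mono hsub2)
    (⟨le_of_lt htlb, le_of_lt htub2⟩ : t ∈ Icc (ψ astar) (ψ b₂))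
  have ha₁S : a₁ ∈ S := hsub1 ha₁mem
  have ha₂S : a₂ ∈ S := hsub2 ha₂mem
  have ha₁lt : a₁ < astar := lt_of_le_of_ne ha₁mem.2 (by rintro rfl; exact absurd ha₁ (ne_of_gt htlb).symm)
  have ha₂gt : astar < a₂ := lt_of_le_of_ne ha₂mem.1 (by rintro rfl; exact absurd ha₂ (ne_of_gt htlb).symm)
  refine ⟨t, a₁, a₂, ha₁S, ha₂S, ha₁lt, ha₂gt, ha₁, ha₂, ?_⟩
  intro a haS hat
  by_cases h : a ≤ astar
  · left
    exact hanti.injOn ⟨haS, h⟩ ⟨ha₁S, le_of_lt ha₁lt⟩ (by rw [hat, ha₁])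
  · right
    exact hmono.injOn ⟨haS, le_of_lt (lt_of_not_ge h)⟩ ⟨ha₂S, le_of_lt ha₂gt⟩ (by rw [hat, ha₂])

def Phi (e₁ f₁ e₂ f₂ : ℕ) (κ p κt pt g c : ℝ) : ℝ → ℝ := fun a =>
  κ * p * (a ^ e₁ * (g * a + c) ^ f₁) + κt * pt * (a ^ e₂ * (g * a + c) ^ f₂)

lemma natpow_aux : ∀ (k : ℕ) (x : ℝ), (k:ℝ) * x ^ (k-1) * x = (k:ℝ) * x ^ k := by
  intro k x
  cases k with
  | zero => simp
  | succ k => push_cast [Nat.add_sub_cancel]; rw [pow_succ]; ring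

set_option maxHeartbeats 1000000 in
lemma main_aux (e₁ f₁ e₂ f₂ : ℕ) (p pt q lam : ℝ) (hlam : 0 < lam)
    (hdep0 : p = -lam * pt)
    (hpqmn : p * q * ((e₁ : ℝ) - (e₂ : ℝ)) * ((f₁ : ℝ) - (f₂ : ℝ)) < 0)
    (hmn : ((e₁ : ℝ) - (e₂ : ℝ)) + ((f₁ : ℝ) - (f₂ : ℝ)) ≠ 0) :
    ∃ κ κt c : ℝ, 0 < κ ∧ 0 < κt ∧
      ∃ a₁ a₂ : ℝ, 0 < a₁ ∧ a₁ < a₂ ∧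
        0 < q / p * a₁ + c ∧ 0 < q / p * a₂ + c ∧
        Phi e₁ f₁ e₂ f₂ κ p κt pt (q / p) c a₁ = 0 ∧
        Phi e₁ f₁ e₂ f₂ κ p κt pt (q / p) c a₂ = 0 ∧
        deriv (Phi e₁ f₁ e₂ f₂ κ p κt pt (q / p) c) a₁ ≠ 0 ∧
        deriv (Phi e₁ f₁ e₂ f₂ κ p κt pt (q / p) c) a₂ ≠ 0 ∧
        ((deriv (Phi e₁ f₁ e₂ f₂ κ p κt pt (q / p) c) a₁ < 0 ∧
            0 < deriv (Phi e₁ f₁ e₂ f₂ κ p κt pt (q / p) c) a₂) ∨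
          (0 < deriv (Phi e₁ f₁ e₂ f₂ κ p κt pt (q / p) c) a₁ ∧
            deriv (Phi e₁ f₁ e₂ f₂ κ p κt pt (q / p) c) a₂ < 0)) ∧
        ∀ a : ℝ, 0 < a → 0 < q / p * a + c →
          Phi e₁ f₁ e₂ f₂ κ p κt pt (q / p) c a = 0 → a = a₁ ∨ a = a₂ := by
  obtain ⟨m, hm_def⟩ : ∃ m : ℝ, m = (e₁ : ℝ) - (e₂ : ℝ) := ⟨_, rfl⟩
  obtain ⟨n, hn_def⟩ : ∃ n : ℝ, n = (f₁ : ℝ) - (f₂ : ℝ) := ⟨_, rfl⟩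
  obtain ⟨γ, hγ_def⟩ : ∃ g : ℝ, g = q / p := ⟨_, rfl⟩
  rw [← hm_def, ← hn_def] at hpqmn hmn
  rw [← hγ_def]
  have hp : p ≠ 0 := by intro h; rw [h] at hpqmn; simp at hpqmn
  have hq : q ≠ 0 := by intro h; rw [h] at hpqmn; simp at hpqmn
  have hm : m ≠ 0 := by intro h; rw [h] at hpqmn; simp at hpqmn
  have hn : n ≠ 0 := by intro h; rw [h] at hpqmn; simp at hpqmn
  have hγ : γ ≠ 0 := by rw [hγ_def]; exact div_ne_zero hq hp
  have hmnγ : m * n * γ < 0 := by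
    have h1 : m * n * γ = (p * q * m * n) / p ^ 2 := by
      rw [hγ_def]; field_simp
    rw [h1]
    exact div_neg_of_neg_of_pos hpqmn (pow_two_pos_of_ne_zero hp)
  obtain ⟨σ, hσ_def⟩ : ∃ s : ℝ, s = (m + n) * γ := ⟨_, rfl⟩
  have hσ : σ ≠ 0 := by rw [hσ_def]; exact mul_ne_zero hmn hγ
  obtain ⟨c, hc_def⟩ : ∃ c : ℝ, c = (m + n) * n * γ ^ 2 := ⟨_, rfl⟩
  obtain ⟨astar, hastar_def⟩ : ∃ x : ℝ, x = -(m * n * γ) := ⟨_, rfl⟩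
  have hastar : 0 < astar := by rw [hastar_def]; linarith
  have hustar : γ * astar + c = (n * γ) ^ 2 := by rw [hastar_def, hc_def]; ring
  have hkeyid : ∀ x : ℝ, σ * (x - astar) = m * (γ * x + c) + n * (γ * x) := by
    intro x; rw [hσ_def, hastar_def, hc_def]; ring
  set S : Set ℝ := {a : ℝ | 0 < a ∧ 0 < γ * a + c} with hS_def
  have hmemS : astar ∈ S :=
    ⟨hastar, by rw [hustar]; exact pow_two_pos_of_ne_zero (mul_ne_zero hn hγ)⟩
  have hopen : IsOpen S :=
    IsOpen.and (isOpen_lt continuous_const continuous_id)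
      (isOpen_lt continuous_const (by continuity))
  have hconv : Convex ℝ S := by
    intro x hx y hy α β hα hβ hαβ
    simp only [hS_def, Set.mem_setOf_eq, smul_eq_mul] at hx hy ⊢
    constructor
    · rcases le_or_gt α (1/2) with h | h
      · have hβ2 : (1/2 : ℝ) ≤ β := by linarith
        have h1 : 0 ≤ α * x := mul_nonneg hα hx.1.le
        have h2 : (1/2) * y ≤ β * y := mul_le_mul_of_nonneg_right hβ2 hy.1.le
        nlinarith [hy.1]
      · have h1 : 0 ≤ β * y := mul_nonneg hβ hy.1.le
        have h2 : (1/2) * x ≤ α * x := mul_le_mul_of_nonneg_right h.le hx.1.le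
        nlinarith [hx.1]
    · have hc1 : α * c + β * c = c := by linear_combination c * hαβ
      rcases le_or_gt α (1/2) with h | h
      · have hβ2 : (1/2 : ℝ) ≤ β := by linarith
        have h1 : 0 ≤ α * (γ * x + c) := mul_nonneg hα hx.2.le
        have h2 : (1/2) * (γ * y + c) ≤ β * (γ * y + c) :=
          mul_le_mul_of_nonneg_right hβ2 hy.2.le
        nlinarith [hy.2, hc1]
      · have h1 : 0 ≤ β * (γ * y + c) := mul_nonneg hβ hy.2.le
        have h2 : (1/2) * (γ * x + c) ≤ α * (γ * x + c) :=
          mul_le_mul_of_nonneg_right h.le hx.2.le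
        nlinarith [hx.2, hc1]
  obtain ⟨ψ, hψ_def⟩ : ∃ ψ : ℝ → ℝ,
      ψ = fun a => m * Real.log a + n * Real.log (γ * a + c) := ⟨_, rfl⟩
  have hψ_app : ∀ a : ℝ, ψ a = m * Real.log a + n * Real.log (γ * a + c) := by
    intro a; rw [hψ_def]
  have hψd : ∀ x ∈ S, HasDerivAt ψ (σ * (x - astar) / (x * (γ * x + c))) x := by
    intro x hx
    obtain ⟨hx1, hx2⟩ := hx
    have hud : HasDerivAt (fun a : ℝ => γ * a + c) γ x := by
      simpa using ((hasDerivAt_id x).const_mul γ).add_const c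
    have hlog2 : HasDerivAt (fun a : ℝ => Real.log (γ * a + c)) ((γ * x + c)⁻¹ * γ) x :=
      by have := (Real.hasDerivAt_log (ne_of_gt hx2)).comp x hud; exact this
    have h := ((Real.hasDerivAt_log (ne_of_gt hx1)).const_mul m).add (hlog2.const_mul n)
    rw [hψ_def]
    refine HasDerivAt.congr_deriv h ?_
    rw [hkeyid x]
    have hx1' : x ≠ 0 := ne_of_gt hx1
    have hx2' : γ * x + c ≠ 0 := ne_of_gt hx2
    rw [eq_div_iff (mul_ne_zero hx1' hx2')]
    linear_combination (m * (γ * x + c)) * inv_mul_cancel₀ hx1' + (n * γ * x) * inv_mul_cancel₀ hx2'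
  have hderiv_eq : ∀ x ∈ S, deriv ψ x = σ * (x - astar) / (x * (γ * x + c)) :=
    fun x hx => (hψd x hx).deriv
  have hdiff : ∀ x ∈ S, DifferentiableAt ℝ ψ x := fun x hx => (hψd x hx).differentiableAt
  have hkey : ∃ t a₁ a₂, a₁ ∈ S ∧ a₂ ∈ S ∧ a₁ < astar ∧ astar < a₂ ∧
      ψ a₁ = t ∧ ψ a₂ = t ∧ ∀ a ∈ S, ψ a = t → a = a₁ ∨ a = a₂ := by
    rcases lt_or_gt_of_ne hσ with hneg | hpos
    · obtain ⟨t, a₁, a₂, h1, h2, h3, h4, h5, h6, h7⟩ := key2 (fun a => -ψ a) S hopen hconv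
        astar hmemS (fun x hx => (hdiff x hx).neg)
        (fun x hx hne => by
          have hd : deriv (fun a => -ψ a) x = -(σ * (x - astar) / (x * (γ * x + c))) := by
            rw [deriv.fun_neg, hderiv_eq x hx]
          rw [hd]
          have he : -(σ * (x - astar) / (x * (γ * x + c))) * (x - astar)
              = (-σ) * (x - astar) ^ 2 / (x * (γ * x + c)) := by ring
          rw [he]
          exact div_pos (mul_pos (by linarith) (pow_two_pos_of_ne_zero (sub_ne_zero.2 hne)))
            (mul_pos hx.1 hx.2))
      have h5' : -ψ a₁ = t := h5
      have h6' : -ψ a₂ = t := h6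
      refine ⟨-t, a₁, a₂, h1, h2, h3, h4, by linarith, by linarith, ?_⟩
      intro a ha hat
      exact h7 a ha (show -ψ a = t by rw [hat]; ring)
    · obtain ⟨t, a₁, a₂, h1, h2, h3, h4, h5, h6, h7⟩ := key2 ψ S hopen hconv
        astar hmemS hdiff
        (fun x hx hne => by
          rw [hderiv_eq x hx]
          have he : σ * (x - astar) / (x * (γ * x + c)) * (x - astar)
              = σ * (x - astar) ^ 2 / (x * (γ * x + c)) := by ring
          rw [he]
          exact div_pos (mul_pos hpos (pow_two_pos_of_ne_zero (sub_ne_zero.2 hne)))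
            (mul_pos hx.1 hx.2))
      exact ⟨t, a₁, a₂, h1, h2, h3, h4, h5, h6, h7⟩
  obtain ⟨t, a₁, a₂, ha₁S, ha₂S, ha₁lt, ha₂gt, hψ1, hψ2, huniq⟩ := hkey
  obtain ⟨E, hE_def⟩ : ∃ E : ℝ, E = Real.exp t := ⟨_, rfl⟩
  have hE : 0 < E := hE_def ▸ Real.exp_pos t
  have hptE : lam * E * pt = -(E * p) := by rw [hdep0]; ring
  have hsplit : ∀ a : ℝ, Phi e₁ f₁ e₂ f₂ 1 p (lam * E) pt γ c a
      = p * (a ^ e₁ * (γ * a + c) ^ f₁ - E * (a ^ e₂ * (γ * a + c) ^ f₂)) := by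
    intro a
    show 1 * p * (a ^ e₁ * (γ * a + c) ^ f₁) + lam * E * pt * (a ^ e₂ * (γ * a + c) ^ f₂) = _
    linear_combination (a ^ e₂ * (γ * a + c) ^ f₂) * hptE
  have hroot_iff : ∀ a : ℝ, 0 < a → 0 < γ * a + c →
      (Phi e₁ f₁ e₂ f₂ 1 p (lam * E) pt γ c a = 0 ↔ ψ a = t) := by
    intro a ha hu
    have hA : 0 < a ^ e₁ * (γ * a + c) ^ f₁ := by positivity
    have hB : 0 < a ^ e₂ * (γ * a + c) ^ f₂ := by positivity
    have hlogA : Real.log (a ^ e₁ * (γ * a + c) ^ f₁)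
        = e₁ * Real.log a + f₁ * Real.log (γ * a + c) := by
      rw [Real.log_mul (by positivity) (by positivity), Real.log_pow, Real.log_pow]
    have hlogB : Real.log (a ^ e₂ * (γ * a + c) ^ f₂)
        = e₂ * Real.log a + f₂ * Real.log (γ * a + c) := by
      rw [Real.log_mul (by positivity) (by positivity), Real.log_pow, Real.log_pow]
    rw [hψ_app a]
    constructor
    · intro h0
      rw [hsplit a] at h0
      have hAB : a ^ e₁ * (γ * a + c) ^ f₁ = E * (a ^ e₂ * (γ * a + c) ^ f₂) := by
        rcases mul_eq_zero.1 h0 with h | h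
        · exact absurd h hp
        · linarith
      have hlg := congrArg Real.log hAB
      rw [hlogA, Real.log_mul (ne_of_gt hE) (ne_of_gt hB), hE_def, Real.log_exp, hlogB] at hlg
      rw [hm_def, hn_def]; linarith
    · intro hψt
      rw [hm_def, hn_def] at hψt
      have h1 : Real.log (a ^ e₁ * (γ * a + c) ^ f₁)
          = Real.log (E * (a ^ e₂ * (γ * a + c) ^ f₂)) := by
        rw [hlogA, Real.log_mul (ne_of_gt hE) (ne_of_gt hB), hE_def, Real.log_exp, hlogB]
        linarith
      have hAB : a ^ e₁ * (γ * a + c) ^ f₁ = E * (a ^ e₂ * (γ * a + c) ^ f₂) := by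
        calc a ^ e₁ * (γ * a + c) ^ f₁
            = Real.exp (Real.log (a ^ e₁ * (γ * a + c) ^ f₁)) := (Real.exp_log hA).symm
          _ = Real.exp (Real.log (E * (a ^ e₂ * (γ * a + c) ^ f₂))) := by rw [h1]
          _ = E * (a ^ e₂ * (γ * a + c) ^ f₂) := Real.exp_log (by positivity)
      rw [hsplit a, hAB]; ring
  have hderiv_val : ∀ a : ℝ, 0 < a → 0 < γ * a + c →
      Phi e₁ f₁ e₂ f₂ 1 p (lam * E) pt γ c a = 0 →
      deriv (Phi e₁ f₁ e₂ f₂ 1 p (lam * E) pt γ c) a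
        = p * (a ^ e₁ * (γ * a + c) ^ f₁) * σ * (a - astar) / (a * (γ * a + c)) := by
    intro a ha hu h0
    have hB : 0 < a ^ e₂ * (γ * a + c) ^ f₂ := by positivity
    have hAB : a ^ e₁ * (γ * a + c) ^ f₁ = E * (a ^ e₂ * (γ * a + c) ^ f₂) := by
      rw [hsplit a] at h0
      rcases mul_eq_zero.1 h0 with h | h
      · exact absurd h hp
      · linarith
    have hud : HasDerivAt (fun x : ℝ => γ * x + c) γ a := by
      simpa using ((hasDerivAt_id a).const_mul γ).add_const c
    have h1 : HasDerivAt (fun x : ℝ => x ^ e₁ * (γ * x + c) ^ f₁)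
        ((e₁ : ℝ) * a ^ (e₁ - 1) * (γ * a + c) ^ f₁
          + a ^ e₁ * ((f₁ : ℝ) * (γ * a + c) ^ (f₁ - 1) * γ)) a :=
      (hasDerivAt_pow e₁ a).mul (hud.pow f₁)
    have h2 : HasDerivAt (fun x : ℝ => x ^ e₂ * (γ * x + c) ^ f₂)
        ((e₂ : ℝ) * a ^ (e₂ - 1) * (γ * a + c) ^ f₂
          + a ^ e₂ * ((f₂ : ℝ) * (γ * a + c) ^ (f₂ - 1) * γ)) a :=
      (hasDerivAt_pow e₂ a).mul (hud.pow f₂)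
    have hD : HasDerivAt (Phi e₁ f₁ e₂ f₂ 1 p (lam * E) pt γ c)
        (1 * p * ((e₁ : ℝ) * a ^ (e₁ - 1) * (γ * a + c) ^ f₁
            + a ^ e₁ * ((f₁ : ℝ) * (γ * a + c) ^ (f₁ - 1) * γ))
          + lam * E * pt * ((e₂ : ℝ) * a ^ (e₂ - 1) * (γ * a + c) ^ f₂
            + a ^ e₂ * ((f₂ : ℝ) * (γ * a + c) ^ (f₂ - 1) * γ))) a :=
      (h1.const_mul (1 * p)).add (h2.const_mul (lam * E * pt))
    have hDval := hD.deriv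
    have hkeymul : a * (γ * a + c) * deriv (Phi e₁ f₁ e₂ f₂ 1 p (lam * E) pt γ c) a
        = p * (a ^ e₁ * (γ * a + c) ^ f₁) * (σ * (a - astar)) := by
      rw [hDval, hkeyid a, hm_def, hn_def]
      linear_combination (p * (γ * a + c) ^ f₁ * (γ * a + c)) * natpow_aux e₁ a
        + (p * a ^ e₁ * a * γ) * natpow_aux f₁ (γ * a + c)
        + (a * (γ * a + c) * ((e₂ : ℝ) * a ^ (e₂ - 1) * (γ * a + c) ^ f₂
            + a ^ e₂ * ((f₂ : ℝ) * (γ * a + c) ^ (f₂ - 1) * γ))) * hptE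
        - (E * p * (γ * a + c) ^ f₂ * (γ * a + c)) * natpow_aux e₂ a
        - (E * p * a ^ e₂ * a * γ) * natpow_aux f₂ (γ * a + c)
        + (p * (e₂ : ℝ) * (γ * a + c) + p * (f₂ : ℝ) * γ * a) * hAB
    have hau : a * (γ * a + c) ≠ 0 := ne_of_gt (mul_pos ha hu)
    rw [eq_div_iff hau]
    linear_combination hkeymul
  have hr₁ : Phi e₁ f₁ e₂ f₂ 1 p (lam * E) pt γ c a₁ = 0 := (hroot_iff a₁ ha₁S.1 ha₁S.2).2 hψ1
  have hr₂ : Phi e₁ f₁ e₂ f₂ 1 p (lam * E) pt γ c a₂ = 0 := (hroot_iff a₂ ha₂S.1 ha₂S.2).2 hψ2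
  have hd₁ := hderiv_val a₁ ha₁S.1 ha₁S.2 hr₁
  have hd₂ := hderiv_val a₂ ha₂S.1 ha₂S.2 hr₂
  have hA₁ : 0 < a₁ ^ e₁ * (γ * a₁ + c) ^ f₁ := by
    have h1 := ha₁S.1; have h2 := ha₁S.2; positivity
  have hA₂ : 0 < a₂ ^ e₁ * (γ * a₂ + c) ^ f₁ := by
    have h1 := ha₂S.1; have h2 := ha₂S.2; positivity
  have hsign : (deriv (Phi e₁ f₁ e₂ f₂ 1 p (lam * E) pt γ c) a₁ < 0 ∧
        0 < deriv (Phi e₁ f₁ e₂ f₂ 1 p (lam * E) pt γ c) a₂) ∨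
      (0 < deriv (Phi e₁ f₁ e₂ f₂ 1 p (lam * E) pt γ c) a₁ ∧
        deriv (Phi e₁ f₁ e₂ f₂ 1 p (lam * E) pt γ c) a₂ < 0) := by
    rcases lt_or_gt_of_ne (mul_ne_zero hp hσ) with hps | hps
    · right
      constructor
      · rw [hd₁]
        apply div_pos ?_ (mul_pos ha₁S.1 ha₁S.2)
        nlinarith [mul_pos (mul_pos_of_neg_of_neg hps
          (show a₁ - astar < 0 by linarith)) hA₁]
      · rw [hd₂]
        apply div_neg_of_neg_of_pos ?_ (mul_pos ha₂S.1 ha₂S.2)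
        nlinarith [mul_neg_of_neg_of_pos hps (show 0 < a₂ - astar by linarith), hA₂,
          mul_neg_of_neg_of_pos (mul_neg_of_neg_of_pos hps
            (show 0 < a₂ - astar by linarith)) hA₂]
    · left
      constructor
      · rw [hd₁]
        apply div_neg_of_neg_of_pos ?_ (mul_pos ha₁S.1 ha₁S.2)
        nlinarith [mul_neg_of_neg_of_pos (mul_neg_of_pos_of_neg hps
          (show a₁ - astar < 0 by linarith)) hA₁]
      · rw [hd₂]
        apply div_pos ?_ (mul_pos ha₂S.1 ha₂S.2)
        nlinarith [mul_pos (mul_pos hps (show 0 < a₂ - astar by linarith)) hA₂]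
  refine ⟨1, lam * E, c, one_pos, by positivity, a₁, a₂, ha₁S.1, lt_trans ha₁lt ha₂gt,
    ha₁S.2, ha₂S.2, hr₁, hr₂, ?_, ?_, hsign, ?_⟩
  · rcases hsign with ⟨h, _⟩ | ⟨h, _⟩
    · exact ne_of_lt h
    · exact ne_of_gt h
  · rcases hsign with ⟨_, h⟩ | ⟨_, h⟩
    · exact ne_of_gt h
    · exact ne_of_lt h
  · intro a ha hu h0
    exact huniq a ⟨ha, hu⟩ ((hroot_iff a ha hu).1 h0)

/-- Two-species, two-reaction mass-action network whose reaction vectors are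
negative scalar multiples of each other, with `β₁β₂ < 0` and `ỹ - y` not a
scalar multiple of `(1,-1)`.  Then some choice of positive rate constants and
some stoichiometric compatibility class (a line `x₂ = γx₁ + c` with `γ` the
common slope of the reaction vectors) contains exactly two positive steady
states, both nondegenerate for the reduced 1-dimensional dynamics `φ`, with
exactly one of them exponentially stable (`φ' < 0`). -/
theorem two_species_two_reaction_two_nondegenerate_steady_states
    (y y' yt yt' : Fin 2 → ℕ) (lam : ℝ) (hlam : 0 < lam)
    (hdep : ∀ i, (y' i : ℝ) - y i = -lam * ((yt' i : ℝ) - yt i))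
    (hβ : (((y' 0 : ℤ) - y 0) * ((yt 0 : ℤ) - y 0)) *
          (((y' 1 : ℤ) - y 1) * ((yt 1 : ℤ) - y 1)) < 0)
    (hslope : (yt 1 : ℝ) - y 1 ≠ -((yt 0 : ℝ) - y 0)) :
    ∃ κ κt c : ℝ, 0 < κ ∧ 0 < κt ∧
      (let γ : ℝ := ((y' 1 : ℝ) - y 1) / ((y' 0 : ℝ) - y 0)
      let φ : ℝ → ℝ := fun a =>
        κ * ((y' 0 : ℝ) - y 0) * (a ^ (y 0) * (γ * a + c) ^ (y 1)) +
        κt * ((yt' 0 : ℝ) - yt 0) * (a ^ (yt 0) * (γ * a + c) ^ (yt 1))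
      ∃ a₁ a₂ : ℝ, 0 < a₁ ∧ a₁ < a₂ ∧
        0 < γ * a₁ + c ∧ 0 < γ * a₂ + c ∧
        φ a₁ = 0 ∧ φ a₂ = 0 ∧
        deriv φ a₁ ≠ 0 ∧ deriv φ a₂ ≠ 0 ∧
        ((deriv φ a₁ < 0 ∧ 0 < deriv φ a₂) ∨ (0 < deriv φ a₁ ∧ deriv φ a₂ < 0)) ∧
        ∀ a : ℝ, 0 < a → 0 < γ * a + c → φ a = 0 → a = a₁ ∨ a = a₂) := by
  have h0 := hdep 0
  have hβ' : (((y' 0 : ℝ) - y 0) * ((yt 0 : ℝ) - y 0)) *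
      (((y' 1 : ℝ) - y 1) * ((yt 1 : ℝ) - y 1)) < 0 := by exact_mod_cast hβ
  exact main_aux (y 0) (y 1) (yt 0) (yt 1) ((y' 0 : ℝ) - y 0) ((yt' 0 : ℝ) - yt 0)
    ((y' 1 : ℝ) - y 1) lam hlam h0 (by nlinarith [hβ']) (fun h => hslope (by linarith))
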